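/- The ideal I = (3+√-7) in the ring ℤ[√-7] has no factorization as a product of proper 2-absorbing ideals. -/

import Mathlib

/-- An ideal is 2-absorbing if whenever a product of three elements lies in it,
the product of some two of them lies in it. -/
def IsTwoAbsorbing {R : Type*} [CommRing R] (I : Ideal R) : Prop :=
  ∀ a b c : R, a * b * c ∈ I → a * b ∈ I ∨ a * c ∈ I ∨ b * c ∈ I

/-- A TAF-ring: every proper ideal is a finite product of proper 2-absorbing ideals. -/
def IsTAFRing (R : Type*) [CommRing R] : Prop :=
  ∀ I : Ideal R, I ≠ ⊤ → ∃ (n : ℕ) (J : Fin n → Ideal R),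
    (∀ i, J i ≠ ⊤ ∧ IsTwoAbsorbing (J i)) ∧ I = ∏ i, J i

namespace NoTAFAux

local notation "R7" => Zsqrtd (-7)

lemma intCast_eq (n : ℤ) : ((n:ℤ):R7) = ⟨n, 0⟩ := by ext <;> simp

/-- If `16 ∈ J` and `J` is 2-absorbing then `4 ∈ J`. -/
lemma four_mem {J : Ideal R7} (hTA : IsTwoAbsorbing J) (h16 : (16 : R7) ∈ J) :
    (4 : R7) ∈ J := by
  have h8to4 : (8 : R7) ∈ J → (4 : R7) ∈ J := by
    intro h8
    rcases hTA 2 2 2 (by rw [show (2:R7)*2*2 = 8 by norm_num]; exact h8) with h | h | h <;>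
      simpa [show (2:R7)*2 = 4 by norm_num] using h
  rcases hTA 2 2 4 (by rw [show (2:R7)*2*4 = 16 by norm_num]; exact h16) with h | h | h
  · simpa [show (2:R7)*2 = 4 by norm_num] using h
  · exact h8to4 (by simpa [show (2:R7)*4 = 8 by norm_num] using h)
  · exact h8to4 (by simpa [show (2:R7)*4 = 8 by norm_num] using h)

/-- If `J` is proper and `8 ∈ J`, then every member of `J` has even coordinate sum. -/
lemma even_sum_of_mem {J : Ideal R7} (hne : J ≠ ⊤) (h8 : (8 : R7) ∈ J)
    {a : R7} (ha : a ∈ J) : Even (a.re + a.im) := by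
  by_contra hodd
  -- the norm n = re² + 7 im² is odd
  obtain ⟨m, hm⟩ := Int.not_even_iff_odd.mp hodd
  set n : ℤ := a.re^2 + 7*a.im^2 with hn
  have hnodd : Odd n := by
    refine ⟨2*m^2 + 2*m - 2*m*a.im - a.im + 4*a.im^2, ?_⟩
    have hx : a.re = 2*m + 1 - a.im := by omega
    rw [hn, hx]; ring
  -- n² = 8k + 1
  obtain ⟨t, ht⟩ := hnodd
  obtain ⟨s, hs⟩ := Int.even_mul_succ_self t
  have hsq : n * n = 8 * s + 1 := by rw [ht]; linear_combination 4 * hs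
  -- n² ∈ J since n = a * star a
  have hkey : a * star a = ((n:ℤ):R7) := by
    rw [intCast_eq]; ext <;> simp [Zsqrtd.re_mul, Zsqrtd.im_mul, hn] <;> ring
  have hn2 : ((n:ℤ):R7) * ((n:ℤ):R7) ∈ J := by
    rw [← hkey, show a * star a * (a * star a) = a * (star a * (a * star a)) by ring]
    exact Ideal.mul_mem_right _ _ ha
  have h8s : (8 : R7) * ((s:ℤ):R7) ∈ J := Ideal.mul_mem_right _ _ h8
  have hone : (1 : R7) ∈ J := by
    have : (1 : R7) = ((n:ℤ):R7) * ((n:ℤ):R7) - (8 : R7) * ((s:ℤ):R7) := by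
      have : ((n * n : ℤ) : R7) = ((8 * s + 1 : ℤ) : R7) := by rw [hsq]
      push_cast at this
      linear_combination -this
    rw [this]
    exact Submodule.sub_mem J hn2 h8s
  exact hne ((Ideal.eq_top_iff_one J).mpr hone)

/-- Elements of a product of two "even coordinate sum" ideals satisfy a mod-4 condition. -/
lemma prod_invariant {J K : Ideal R7}
    (hJ : ∀ a ∈ J, Even (a.re + a.im)) (hK : ∀ a ∈ K, Even (a.re + a.im))
    {x : R7} (hx : x ∈ J * K) :
    Even x.re ∧ Even x.im ∧ (4 : ℤ) ∣ (x.re + x.im) := by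
  refine Submodule.mul_induction_on hx ?_ ?_
  · intro a ha b hb
    obtain ⟨p, hp⟩ := hJ a ha
    obtain ⟨q, hq⟩ := hK b hb
    have hx : a.re = p + p - a.im := by omega
    have hu : b.re = q + q - b.im := by omega
    refine ⟨⟨2*p*q - p*b.im - q*a.im - 3*(a.im*b.im), ?_⟩,
            ⟨p*b.im + q*a.im - a.im*b.im, ?_⟩,
            ⟨p*q - 2*(a.im*b.im), ?_⟩⟩ <;>
      simp only [Zsqrtd.re_mul, Zsqrtd.im_mul, hx, hu] <;> ring
  · rintro x y ⟨⟨px, hpx⟩, ⟨qx, hqx⟩, hdx⟩ ⟨⟨py, hpy⟩, ⟨qy, hqy⟩, hdy⟩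
    refine ⟨⟨px + py, ?_⟩, ⟨qx + qy, ?_⟩, ?_⟩
    · simp [Zsqrtd.re_add, hpx, hpy]; ring
    · simp [Zsqrtd.im_add, hqx, hqy]; ring
    · simp only [Zsqrtd.re_add, Zsqrtd.im_add]
      have : x.re + x.im + (y.re + y.im) = (x.re + y.re) + (x.im + y.im) := by ring
      rw [← this]
      exact dvd_add hdx hdy

end NoTAFAux

theorem no_TA_factorization_of_span_three_add_sqrt_neg_seven :
    ¬ ∃ (n : ℕ) (J : Fin n → Ideal (Zsqrtd (-7))),
      (∀ i, J i ≠ ⊤ ∧ IsTwoAbsorbing (J i)) ∧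
      Ideal.span {(⟨3, 1⟩ : Zsqrtd (-7))} = ∏ i, J i := by
  rintro ⟨n, J, hJ, hprod⟩
  set α : Zsqrtd (-7) := ⟨3, 1⟩ with hα
  -- 16 ∈ span {α}
  have h16I : (16 : Zsqrtd (-7)) ∈ Ideal.span {α} :=
    Ideal.mem_span_singleton.mpr ⟨⟨3, -1⟩, by ext <;> simp [hα, Zsqrtd.re_mul, Zsqrtd.im_mul]⟩
  have hle : ∀ i, Ideal.span {α} ≤ J i := by
    intro i
    rw [hprod]
    exact le_trans Ideal.prod_le_inf (Finset.inf_le (Finset.mem_univ i))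
  have h16 : ∀ i, (16 : Zsqrtd (-7)) ∈ J i := fun i => hle i h16I
  have h4 : ∀ i, (4 : Zsqrtd (-7)) ∈ J i := fun i => NoTAFAux.four_mem (hJ i).2 (h16 i)
  have h8 : ∀ i, (8 : Zsqrtd (-7)) ∈ J i := by
    intro i
    rw [show (8 : Zsqrtd (-7)) = 2 * 4 by norm_num]
    exact Ideal.mul_mem_left _ _ (h4 i)
  have heven : ∀ i, ∀ a ∈ J i, Even (a.re + a.im) := fun i a ha =>
    NoTAFAux.even_sum_of_mem (hJ i).1 (h8 i) ha
  match n, J, hJ, hprod, h4, heven with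
  | 0, J, hJ, hprod, h4, heven =>
    -- empty product is ⊤, so 1 ∈ span {α}, impossible
    simp only [Finset.univ_eq_empty, Finset.prod_empty, Ideal.one_eq_top] at hprod
    have h1 : (1 : Zsqrtd (-7)) ∈ Ideal.span {α} := by rw [hprod]; trivial
    obtain ⟨c, hc⟩ := Ideal.mem_span_singleton.mp h1
    have h1' := congrArg Zsqrtd.re hc
    have h2' := congrArg Zsqrtd.im hc
    simp [hα, Zsqrtd.re_mul, Zsqrtd.im_mul] at h1' h2'
    omega
  | 1, J, hJ, hprod, h4, heven =>
    -- span {α} = J 0 contains 4, impossible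
    have : (4 : Zsqrtd (-7)) ∈ Ideal.span {α} := by
      rw [hprod, show (∏ i : Fin 1, J i) = J 0 by simp]
      exact h4 0
    obtain ⟨c, hc⟩ := Ideal.mem_span_singleton.mp this
    have h1' := congrArg Zsqrtd.re hc
    have h2' := congrArg Zsqrtd.im hc
    simp [hα, Zsqrtd.re_mul, Zsqrtd.im_mul] at h1' h2'
    omega
  | (m + 2), J, hJ, hprod, h4, heven =>
    -- span {α} ⊆ J 0 * J 1, but α fails the mod-4 invariant
    have hle2 : Ideal.span {α} ≤ J 0 * J 1 := by
      rw [hprod, ← Finset.mul_prod_erase Finset.univ J (Finset.mem_univ 0)]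
      refine Ideal.mul_mono_right ?_
      refine le_trans Ideal.prod_le_inf (Finset.inf_le ?_)
      simp
    have hmem : α ∈ J 0 * J 1 := hle2 (Ideal.subset_span rfl)
    obtain ⟨⟨p, hp⟩, -, -⟩ :=
      NoTAFAux.prod_invariant (heven 0) (heven 1) hmem
    simp [hα] at hp
    omega
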